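/- Let C be a finite connected graph and A a nonempty connected subgraph of C such that C is a tree relative to A (that is, every reduced cycle of C is contained in A). Then χ(C) = χ(A), where χ denotes the Euler characteristic (number of vertices minus number of edges). -/

import Mathlib

/-- A combinatorial graph (Serre style): edges come with a fixed-point-free
reversal involution; loops and multiple edges are allowed. -/
structure SGraph where
  V : Type
  E : Type
  init : E → V
  bar : E → E
  bar_bar : ∀ e, bar (bar e) = e
  bar_ne : ∀ e, bar e ≠ e

namespace SGraph

variable (G : SGraph)

/-- Terminal vertex of an edge. -/
def term (e : G.E) : G.V := G.init (G.bar e)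

/-- Consecutive edges of the list match up. -/
def IsChain (l : List G.E) : Prop :=
  List.Chain' (fun e f => G.term e = G.init f) l

/-- A cycle: a nonempty closed edge path. -/
def IsCycle (l : List G.E) : Prop :=
  l ≠ [] ∧ G.IsChain l ∧
    ∀ e f, l.head? = some e → l.getLast? = some f → G.term f = G.init e

/-- A reduced cycle: no edge is followed (cyclically) by its reverse. -/
def IsReducedCycle (l : List G.E) : Prop :=
  G.IsCycle l ∧ List.Chain' (fun e f => f ≠ G.bar e) l ∧
    ∀ e f, l.head? = some e → l.getLast? = some f → e ≠ G.bar f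

/-- A graph is a forest if it contains no reduced cycle. -/
def IsForestGraph : Prop := ∀ l, ¬ G.IsReducedCycle l

/-- A subgraph: a set of vertices and a set of edges, closed under reversal,
with endpoints among the chosen vertices. -/
structure Subgraph (G : SGraph) where
  verts : Set G.V
  edges : Set G.E
  bar_mem : ∀ ⦃e⦄, e ∈ edges → G.bar e ∈ edges
  init_mem : ∀ ⦃e⦄, e ∈ edges → G.init e ∈ verts

variable {G}

namespace Subgraph

/-- Subgraph containment. -/
def le (H K : Subgraph G) : Prop := H.verts ⊆ K.verts ∧ H.edges ⊆ K.edges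

/-- Intersection of two subgraphs. -/
def inter (H K : Subgraph G) : Subgraph G where
  verts := H.verts ∩ K.verts
  edges := H.edges ∩ K.edges
  bar_mem := fun _ he => ⟨H.bar_mem he.1, K.bar_mem he.2⟩
  init_mem := fun _ he => ⟨H.init_mem he.1, K.init_mem he.2⟩

/-- All edges of the list lie in the subgraph. -/
def EdgesIn (H : Subgraph G) (l : List G.E) : Prop := ∀ e ∈ l, e ∈ H.edges

/-- A reduced cycle contained in the subgraph. -/
def IsReducedCycleIn (H : Subgraph G) (l : List G.E) : Prop :=
  G.IsReducedCycle l ∧ H.EdgesIn l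

/-- A subgraph is a forest if it contains no reduced cycle. -/
def IsForest (H : Subgraph G) : Prop := ∀ l, ¬ H.IsReducedCycleIn l

/-- Reachability inside a subgraph by edge paths. -/
inductive Reaches (H : Subgraph G) : G.V → G.V → Prop
  | refl (v : G.V) (hv : v ∈ H.verts) : Reaches H v v
  | step (e : G.E) (he : e ∈ H.edges) {q : G.V} (h : Reaches H (G.term e) q) :
      Reaches H (G.init e) q

/-- A subgraph is connected if it is nonempty and any two of its vertices are
joined by an edge path in it. -/
def Connected (H : Subgraph G) : Prop :=
  H.verts.Nonempty ∧ ∀ p ∈ H.verts, ∀ q ∈ H.verts, H.Reaches p q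

/-- A tree is a connected forest. -/
def IsTree (H : Subgraph G) : Prop := H.IsForest ∧ H.Connected

/-- `C` is a connected component of `H`: its vertices form a reachability class
of `H` and its edges are the induced ones. -/
def IsCompOf (C H : Subgraph G) : Prop :=
  ∃ v ∈ H.verts, C.verts = {w | H.Reaches v w} ∧
    C.edges = {e | e ∈ H.edges ∧ G.init e ∈ C.verts}

/-- `H` is a forest relative to `H'`: every reduced cycle of `H` is contained
in `H'`. -/
def ForestRel (H H' : Subgraph G) : Prop :=
  ∀ l, H.IsReducedCycleIn l → H'.EdgesIn l

/-- `H` is a strong forest relative to `H'`: a relative forest such that each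
component of `H` meets `H'` in an empty or connected subgraph. -/
def StrongForestRel (H H' : Subgraph G) : Prop :=
  H.ForestRel H' ∧
    ∀ C : Subgraph G, C.IsCompOf H → (C.inter H').verts = ∅ ∨ (C.inter H').Connected

/-- Euler characteristic: number of vertices minus number of (geometric)
edges; each geometric edge corresponds to a pair `{e, ē}`. -/
noncomputable def eulerChar (H : Subgraph G) : ℤ :=
  (H.verts.ncard : ℤ) - ((H.edges.ncard / 2 : ℕ) : ℤ)

/-- A walk in `H` from `p` to `q`, given as its list of traversed edges. -/
def IsWalk (H : Subgraph G) (p q : G.V) (l : List G.E) : Prop :=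
  H.EdgesIn l ∧ G.IsChain l ∧
    (∀ e, l.head? = some e → G.init e = p) ∧
    (∀ e, l.getLast? = some e → G.term e = q) ∧
    (l = [] → p = q ∧ p ∈ H.verts)

/-- The weight-0 subgraph of a zero/one-weighted subgraph: all of its vertices
together with its edges of weight 0. -/
def zeroSub (H : Subgraph G) (ω : G.E → ℕ) (hbar : ∀ e, ω (G.bar e) = ω e) :
    Subgraph G where
  verts := H.verts
  edges := {e | e ∈ H.edges ∧ ω e = 0}
  bar_mem := fun e he => ⟨H.bar_mem he.1, by rw [hbar]; exact he.2⟩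
  init_mem := fun _ he => H.init_mem he.1

end Subgraph

/-- The full subgraph of a graph. -/
def full (G : SGraph) : Subgraph G where
  verts := Set.univ
  edges := Set.univ
  bar_mem := fun _ _ => Set.mem_univ _
  init_mem := fun _ _ => Set.mem_univ _

open Classical in
/-- The quotient graph `G/H'` obtained by identifying the subgraph `H'` to a
single vertex `∗` (represented by `none`): its vertices are the vertices of
`G` not in `H'` together with `∗`; its edges are the edges of `G` not in `H'`,
with endpoints in `H'` replaced by `∗`. -/
noncomputable def quot (G : SGraph) (H' : Subgraph G) : SGraph where
  V := Option {v : G.V // v ∉ H'.verts}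
  E := {e : G.E // e ∉ H'.edges}
  init e := if h : G.init e.1 ∈ H'.verts then none else some ⟨G.init e.1, h⟩
  bar e := ⟨G.bar e.1, fun hc => e.2 (by simpa [G.bar_bar] using H'.bar_mem hc)⟩
  bar_bar e := Subtype.ext (G.bar_bar e.1)
  bar_ne e := fun hc => G.bar_ne e.1 (congrArg Subtype.val hc)

end SGraph


namespace SGraph

variable {G : SGraph}

lemma bar_inj : Function.Injective G.bar := fun a b h => by
  have h2 := congrArg G.bar h
  rwa [G.bar_bar, G.bar_bar] at h2

lemma term_bar (e : G.E) : G.term (G.bar e) = G.init e := by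
  show G.init (G.bar (G.bar e)) = G.init e
  rw [G.bar_bar]

namespace Subgraph

lemma term_mem {H : Subgraph G} {e : G.E} (he : e ∈ H.edges) : G.term e ∈ H.verts :=
  H.init_mem (H.bar_mem he)

lemma bar_not_mem {H : Subgraph G} {e : G.E} (he : e ∉ H.edges) : G.bar e ∉ H.edges :=
  fun h => he (by simpa [G.bar_bar] using H.bar_mem h)

end Subgraph

lemma exists_dup_split {α : Type*} {l : List α} (h : ¬ l.Nodup) :
    ∃ (x : α) (l1 l2 l3 : List α), l = l1 ++ x :: l2 ++ x :: l3 := by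
  induction l with
  | nil => simp at h
  | cons a t ih =>
    rw [List.nodup_cons] at h
    push_neg at h
    by_cases ha : a ∈ t
    · obtain ⟨l2, l3, rfl⟩ := List.append_of_mem ha
      exact ⟨a, [], l2, l3, rfl⟩
    · obtain ⟨x, l1, l2, l3, rfl⟩ := ih (h ha)
      exact ⟨x, a :: l1, l2, l3, rfl⟩

/-- A reduced walk with a repeated edge yields a reduced cycle. -/
lemma cycle_of_dup {l : List G.E} (hc : G.IsChain l)
    (hn : List.Chain' (fun e f => f ≠ G.bar e) l)
    (hd : ¬ l.Nodup) : ∃ c, G.IsReducedCycle c ∧ ∀ x ∈ c, x ∈ l := by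
  obtain ⟨x, l1, l2, l3, rfl⟩ := exists_dup_split hd
  have hinf : (x :: l2) ++ [x] <:+: l1 ++ x :: l2 ++ x :: l3 := ⟨l1, l3, by simp⟩
  have hc2 : List.Chain' (fun e f => G.term e = G.init f) ((x :: l2) ++ [x]) :=
    List.IsChain.infix hc hinf
  have hn2 : List.Chain' (fun e f => f ≠ G.bar e) ((x :: l2) ++ [x]) :=
    List.IsChain.infix hn hinf
  rw [List.Chain', List.isChain_append] at hc2 hn2
  refine ⟨x :: l2, ⟨⟨by simp, hc2.1, ?_⟩, hn2.1, ?_⟩, ?_⟩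
  · intro e f he hf
    simp only [List.head?_cons, Option.some.injEq] at he
    have := hc2.2.2 f hf x rfl
    rwa [he] at this
  · intro e f he hf
    simp only [List.head?_cons, Option.some.injEq] at he
    have := hn2.2.2 f hf x rfl
    rwa [he] at this
  · intro y hy
    simp only [List.mem_cons] at hy
    rcases hy with rfl | hy
    · simp
    · simp [hy]

/-- A nonempty closed reduced walk contains a reduced cycle. -/
lemma cycle_of_closed : ∀ (n : ℕ) (l : List G.E), l.length ≤ n → l ≠ [] →
    G.IsChain l → List.Chain' (fun e f => f ≠ G.bar e) l →
    (∀ e f, l.head? = some e → l.getLast? = some f → G.term f = G.init e) →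
    ∃ c, G.IsReducedCycle c ∧ ∀ x ∈ c, x ∈ l := by
  intro n
  induction n with
  | zero =>
    intro l hl hne _ _ _
    exact absurd (List.eq_nil_of_length_eq_zero (Nat.le_zero.mp hl)) hne
  | succ n ih =>
    intro l hl hne hc hn hcl
    by_cases hred : ∀ e f, l.head? = some e → l.getLast? = some f → e ≠ G.bar f
    · exact ⟨l, ⟨⟨hne, hc, hcl⟩, hn, hred⟩, fun x hx => hx⟩
    · push_neg at hred
      obtain ⟨e, f, he, hf, hef⟩ := hred
      obtain ⟨a, t, rfl⟩ := List.exists_cons_of_ne_nil hne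
      simp only [List.head?_cons, Option.some.injEq] at he
      rw [← he] at hef
      clear he
      have hfbar : G.bar a = f := by rw [hef, G.bar_bar]
      rcases List.eq_nil_or_concat t with rfl | ⟨m, g, hcg⟩
      · simp only [List.getLast?_singleton, Option.some.injEq] at hf
        exact absurd (by rw [← hf] at hef; exact hef.symm) (G.bar_ne a)
      · rw [List.concat_eq_append] at hcg
        subst hcg
        have hg : g = G.bar a := by
          have hsg : (a :: (m ++ [g])).getLast? = some g := by
            show ((a :: m) ++ [g]).getLast? = some g
            exact List.getLast?_concat
          rw [hsg] at hf
          have hgf : g = f := by injection hf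
          rw [hgf, ← hfbar]
        subst hg
        have hmne : m ≠ [] := by
          rintro rfl
          simp only [List.nil_append, List.isChain_cons_cons] at hn
          exact (List.isChain_cons_cons.mp hn).1 rfl
        have hinf : [a] ++ m ++ [G.bar a] <:+: a :: (m ++ [G.bar a]) := ⟨[], [], by simp⟩
        have hcx : List.Chain' (fun a b => G.term a = G.init b) ([a] ++ m ++ [G.bar a]) :=
          List.IsChain.infix hc hinf
        rw [List.Chain', List.isChain_append, List.isChain_append] at hcx
        have hminf : m <:+: a :: (m ++ [G.bar a]) := ⟨[a], [G.bar a], by simp⟩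
        have hcm : G.IsChain m := List.IsChain.infix hc hminf
        have hnm : List.Chain' (fun a b => b ≠ G.bar a) m := List.IsChain.infix hn hminf
        have hclm : ∀ e' f', m.head? = some e' → m.getLast? = some f' → G.term f' = G.init e' := by
          intro e' f' he' hf'
          have h1 : G.term a = G.init e' := hcx.1.2.2 a (by simp) e' he' 
          have h2 : G.term f' = G.init (G.bar a) := by
            have := hcx.2.2 f' (by rw [List.getLast?_append_of_ne_nil _ hmne]; exact hf') (G.bar a) rfl
            exact this
          rw [h2, ← h1]
          rfl
        have hlen : m.length ≤ n := by
          simp only [List.length_cons, List.length_append, List.length_singleton] at hl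
          omega
        obtain ⟨c, hc1, hc2⟩ := ih m hlen hmne hcm hnm hclm
        exact ⟨c, hc1, fun x hx => by simp [hc2 x hx]⟩

namespace Subgraph

/-- Remove a leaf vertex and its edge pair. -/
def eraseLeaf (H : Subgraph G) (w : G.V) (f : G.E)
    (hleaf : ∀ g ∈ H.edges, G.init g = w → g = G.bar f) : Subgraph G where
  verts := H.verts \ {w}
  edges := H.edges \ {f, G.bar f}
  bar_mem := fun e he => by
    refine ⟨H.bar_mem he.1, ?_⟩
    intro h
    rcases h with h | h
    · exact he.2 (Or.inr (by rw [← h, G.bar_bar]; exact rfl))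
    · exact he.2 (Or.inl (bar_inj h))
  init_mem := fun e he => by
    refine ⟨H.init_mem he.1, ?_⟩
    intro h
    exact he.2 (Or.inr (hleaf e he.1 h))

lemma reaches_mem_of_subset {H A : Subgraph G} (hsub : H.edges ⊆ A.edges)
    {p q : G.V} (h : H.Reaches p q) (hp : p ∈ A.verts) : q ∈ A.verts := by
  induction h with
  | refl v hv => exact hp
  | step e he h ih => exact ih (A.term_mem (hsub he))

lemma euler_eq_of_edges_subset {H A : Subgraph G} (hle : A.le H) (hconn : H.Connected)
    (hAne : A.verts.Nonempty) (hsub : H.edges ⊆ A.edges) : H.eulerChar = A.eulerChar := by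
  have hE : H.edges = A.edges := subset_antisymm hsub hle.2
  have hV : H.verts = A.verts := by
    refine subset_antisymm ?_ hle.1
    intro p hp
    obtain ⟨a, ha⟩ := hAne
    exact reaches_mem_of_subset hsub (hconn.2 a (hle.1 ha) p hp) ha
  unfold eulerChar
  rw [hE, hV]

lemma reaches_eraseLeaf {H : Subgraph G} {w : G.V} {f : G.E} (hf : f ∈ H.edges)
    (hfw : G.term f = w)
    (hleaf : ∀ g ∈ H.edges, G.init g = w → g = G.bar f)
    {p q : G.V} (h : H.Reaches p q) : q ≠ w →
    (p = w → (H.eraseLeaf w f hleaf).Reaches (G.init f) q) ∧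
    (p ≠ w → (H.eraseLeaf w f hleaf).Reaches p q) := by
  have hfi : G.init f ≠ w := fun hc => G.bar_ne f (hleaf f hf hc).symm
  induction h with
  | refl v hv =>
    intro hq
    exact ⟨fun hp => absurd hp hq, fun hp => Reaches.refl v ⟨hv, hp⟩⟩
  | step e he h ih =>
    intro hq
    constructor
    · intro hp
      have he' : e = G.bar f := hleaf e he hp
      have hte : G.term e = G.init f := by rw [he', term_bar]
      have := (ih hq).2 (by rw [hte]; exact hfi)
      rwa [hte] at this
    · intro hp
      by_cases ht : G.term e = w
      · have hbe : G.bar e = G.bar f := hleaf (G.bar e) (H.bar_mem he) ht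
        have hef : e = f := bar_inj hbe
        have := (ih hq).1 ht
        rw [hef]
        exact this
      · have hmem : e ∈ (H.eraseLeaf w f hleaf).edges := by
          refine ⟨he, ?_⟩
          intro hc
          rcases hc with hc | hc
          · exact ht (hc ▸ hfw)
          · rw [Set.mem_singleton_iff] at hc
            exact hp (by rw [hc]; exact hfw)
        exact Reaches.step e hmem ((ih hq).2 ht)

lemma euler_eraseLeaf {H : Subgraph G} [Fintype G.V] [Fintype G.E]
    {w : G.V} {f : G.E} (hf : f ∈ H.edges) (hw : w ∈ H.verts)
    (hleaf : ∀ g ∈ H.edges, G.init g = w → g = G.bar f) :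
    (H.eraseLeaf w f hleaf).eulerChar = H.eulerChar := by
  have hfin1 : H.verts.Finite := Set.toFinite _
  have hfin2 : H.edges.Finite := Set.toFinite _
  have hpair : ({f, G.bar f} : Set G.E) ⊆ H.edges := by
    intro x hx
    rcases hx with rfl | hx
    · exact hf
    · rw [Set.mem_singleton_iff] at hx
      exact hx ▸ H.bar_mem hf
  have hv1 : (H.verts \ {w}).ncard = H.verts.ncard - 1 :=
    Set.ncard_diff_singleton_of_mem hw
  have he1 : (H.edges \ {f, G.bar f}).ncard = H.edges.ncard - 2 := by
    rw [Set.ncard_diff hpair (Set.toFinite _), Set.ncard_pair (G.bar_ne f).symm]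
  have hv2 : 1 ≤ H.verts.ncard := (Set.ncard_pos hfin1).mpr ⟨w, hw⟩
  have he2 : 2 ≤ H.edges.ncard := by
    have := Set.ncard_le_ncard hpair hfin2
    rwa [Set.ncard_pair (G.bar_ne f).symm] at this
  show ((H.verts \ {w}).ncard : ℤ) - (((H.edges \ {f, G.bar f}).ncard / 2 : ℕ) : ℤ)
      = (H.verts.ncard : ℤ) - ((H.edges.ncard / 2 : ℕ) : ℤ)
  rw [hv1, he1]
  obtain ⟨k, hk⟩ : ∃ k, H.edges.ncard = k + 2 := ⟨H.edges.ncard - 2, by omega⟩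
  rw [hk]
  have : (k + 2) / 2 = k / 2 + 1 := by omega
  rw [this]
  simp only [Nat.add_sub_cancel]
  push_cast [Nat.cast_sub hv2]
  ring


lemma isWalk_cons {H : Subgraph G} {q : G.V} {l : List G.E} {e : G.E}
    (he : e ∈ H.edges) (hw : H.IsWalk (G.term e) q l) :
    H.IsWalk (G.init e) q (e :: l) := by
  obtain ⟨hE, hC, hH, hL, hN⟩ := hw
  refine ⟨?_, ?_, ?_, ?_, ?_⟩
  · intro x hx
    rcases List.mem_cons.mp hx with rfl | hx
    · exact he
    · exact hE x hx
  · refine List.isChain_cons.mpr ⟨?_, hC⟩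
    intro y hy
    exact (hH y hy).symm
  · intro x hx
    simp only [List.head?_cons, Option.some.injEq] at hx
    rw [← hx]
  · intro x hx
    cases l with
    | nil =>
      simp only [List.getLast?_singleton, Option.some.injEq] at hx
      rw [← hx]
      exact (hN rfl).1
    | cons b t =>
      rw [List.getLast?_cons_cons] at hx
      exact hL x hx
  · intro h
    simp at h

lemma isWalk_tail {H : Subgraph G} {v q : G.V} {l : List G.E} {e : G.E}
    (hw : H.IsWalk v q (e :: l)) : G.init e = v ∧ H.IsWalk (G.term e) q l := by
  obtain ⟨hE, hC, hH, hL, hN⟩ := hw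
  have hC' : List.Chain' (fun a b => G.term a = G.init b) (e :: l) := hC
  rw [List.Chain', List.isChain_cons] at hC'
  refine ⟨hH e rfl, ?_, hC'.2, ?_, ?_, ?_⟩
  · intro x hx
    exact hE x (List.mem_cons_of_mem _ hx)
  · intro x hx
    exact (hC'.1 x hx).symm
  · intro x hx
    cases l with
    | nil => simp at hx
    | cons b t =>
      rw [← List.getLast?_cons_cons (a := e)] at hx
      exact hL x hx
  · rintro rfl
    refine ⟨?_, H.term_mem (hE e (List.mem_cons_self))⟩
    exact hL e rfl

lemma reaches_isWalk {H : Subgraph G} {p q : G.V} (h : H.Reaches p q) :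
    ∃ l, H.IsWalk p q l := by
  induction h with
  | refl v hv =>
    exact ⟨[], fun e he => absurd he List.not_mem_nil, List.isChain_nil,
      fun e he => by simp at he, fun e he => by simp at he, fun _ => ⟨rfl, hv⟩⟩
  | step e he h ih =>
    obtain ⟨l, hl⟩ := ih
    exact ⟨e :: l, isWalk_cons he hl⟩

lemma isWalk_reduce {H : Subgraph G} : ∀ (n : ℕ) (p q : G.V) (l : List G.E), l.length ≤ n →
    H.IsWalk p q l → ∃ m, H.IsWalk p q m ∧ List.Chain' (fun e f => f ≠ G.bar e) m := by
  intro n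
  induction n with
  | zero =>
    intro p q l hl hw
    rw [List.eq_nil_of_length_eq_zero (Nat.le_zero.mp hl)] at hw
    exact ⟨[], hw, List.isChain_nil⟩
  | succ n ih =>
    intro p q l hl hw
    match l with
    | [] => exact ⟨[], hw, List.isChain_nil⟩
    | [x] => exact ⟨[x], hw, List.isChain_singleton x⟩
    | x :: y :: t =>
      obtain ⟨hx1, hw1⟩ := isWalk_tail hw
      obtain ⟨hy1, hw2⟩ := isWalk_tail hw1
      by_cases hxy : y = G.bar x
      · have ht : G.term y = p := by rw [hxy, term_bar, hx1]
        rw [ht] at hw2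
        refine ih p q t ?_ hw2
        simp only [List.length_cons] at hl
        omega
      · obtain ⟨m, hm, hmred⟩ := ih (G.term x) q (y :: t) (by simp at hl ⊢; omega) hw1
        match m with
        | [] =>
          refine ⟨[x], ?_, List.isChain_singleton x⟩
          rw [← hx1]
          exact isWalk_cons (hw.1 x (List.mem_cons_self)) hm
        | z :: r =>
          obtain ⟨hz1, hwr⟩ := isWalk_tail hm
          by_cases hzx : z = G.bar x
          · have : G.term z = p := by rw [hzx, term_bar, hx1]
            rw [this] at hwr
            exact ⟨r, hwr, hmred.tail⟩
          · refine ⟨x :: z :: r, ?_, ?_⟩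
            · rw [← hx1]
              exact isWalk_cons (hw.1 x (List.mem_cons_self)) hm
            · exact List.isChain_cons_cons.mpr ⟨hzx, hmred⟩

lemma connected_reduced_walk {A : Subgraph G} (hA : A.Connected) {p q : G.V}
    (hp : p ∈ A.verts) (hq : q ∈ A.verts) :
    ∃ l, A.IsWalk p q l ∧ List.Chain' (fun e f => f ≠ G.bar e) l := by
  obtain ⟨l, hl⟩ := reaches_isWalk (hA.2 p hp q hq)
  exact isWalk_reduce l.length p q l le_rfl hl


lemma eq_head_of_head? {α : Type*} {l : List α} {a : α} (hne : l ≠ [])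
    (h : l.head? = some a) : a = l.head hne := by
  rw [List.head?_eq_head hne] at h
  exact (Option.some_inj.mp h).symm

lemma eq_getLast_of_getLast? {α : Type*} {l : List α} {a : α} (hne : l ≠ [])
    (h : l.getLast? = some a) : a = l.getLast hne := by
  rw [List.getLast?_eq_getLast hne] at h
  exact (Option.some_inj.mp h).symm

/-- A reduced walk all of whose edges lie in `H` but not in `A`. -/
def OutWalk (H A : Subgraph G) (l : List G.E) : Prop :=
  l ≠ [] ∧ G.IsChain l ∧ List.Chain' (fun e f => f ≠ G.bar e) l ∧
    ∀ x ∈ l, x ∈ H.edges ∧ x ∉ A.edges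

lemma outWalk_nodup {H A : Subgraph G}
    (hrel : ∀ l, H.IsReducedCycleIn l → A.EdgesIn l) {l : List G.E}
    (h : OutWalk H A l) : l.Nodup := by
  by_contra hd
  obtain ⟨c, hc, hsub⟩ := cycle_of_dup h.2.1 h.2.2.1 hd
  have hA : A.EdgesIn c := hrel c ⟨hc, fun x hx => (h.2.2.2 x (hsub x hx)).1⟩
  obtain ⟨x, hx⟩ := List.exists_mem_of_ne_nil c hc.1.1
  exact (h.2.2.2 x (hsub x hx)).2 (hA x hx)

lemma exists_max_outWalk [Fintype G.E] {H A : Subgraph G}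
    (hrel : ∀ l, H.IsReducedCycleIn l → A.EdgesIn l)
    {e0 : G.E} (he0 : e0 ∈ H.edges) (he0A : e0 ∉ A.edges) :
    ∃ l, OutWalk H A l ∧ ∀ l', OutWalk H A l' → l'.length ≤ l.length := by
  classical
  set S : Set ℕ := {n | ∃ l, OutWalk H A l ∧ l.length = n} with hS
  have hSne : S.Nonempty := by
    refine ⟨1, [e0], ⟨by simp, List.isChain_singleton _, List.isChain_singleton _, ?_⟩, rfl⟩
    intro x hx
    simp only [List.mem_singleton] at hx
    subst hx
    exact ⟨he0, he0A⟩
  have hbdd : BddAbove S := by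
    refine ⟨Fintype.card G.E, ?_⟩
    rintro m ⟨l, hl, rfl⟩
    exact (outWalk_nodup hrel hl).length_le_card
  obtain ⟨l, hl, hlen⟩ := Nat.sSup_mem hSne hbdd
  exact ⟨l, hl, fun l' hl' => hlen ▸ le_csSup hbdd ⟨l', hl', rfl⟩⟩

lemma erase_step {A : Subgraph G} [Fintype G.V] [Fintype G.E] {n : ℕ}
    (ih : ∀ H : Subgraph G, H.edges.ncard ≤ n → A.le H → H.Connected →
      (∀ l, H.IsReducedCycleIn l → A.EdgesIn l) → H.eulerChar = A.eulerChar)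
    (H : Subgraph G) (hcard : H.edges.ncard ≤ n + 1) (hle : A.le H) (hconn : H.Connected)
    (hrel : ∀ l, H.IsReducedCycleIn l → A.EdgesIn l) (hAne : A.verts.Nonempty)
    {w : G.V} {f : G.E} (hwA : w ∉ A.verts) (hf : f ∈ H.edges) (hfA : f ∉ A.edges)
    (hfw : G.term f = w)
    (hleaf : ∀ g ∈ H.edges, G.init g = w → g = G.bar f) :
    H.eulerChar = A.eulerChar := by
  have hw : w ∈ H.verts := hfw ▸ H.term_mem hf
  have hle' : A.le (H.eraseLeaf w f hleaf) := by
    constructor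
    · intro v hv
      refine ⟨hle.1 hv, ?_⟩
      intro hc
      rw [Set.mem_singleton_iff] at hc
      exact hwA (hc ▸ hv)
    · intro e he
      refine ⟨hle.2 he, ?_⟩
      rintro (hc | hc)
      · exact hfA (hc ▸ he)
      · rw [Set.mem_singleton_iff] at hc
        exact bar_not_mem hfA (hc ▸ he)
  have hconn' : (H.eraseLeaf w f hleaf).Connected := by
    obtain ⟨a, ha⟩ := hAne
    refine ⟨⟨a, hle'.1 ha⟩, ?_⟩
    intro p hp q hq
    have h1 : H.Reaches p q := hconn.2 p hp.1 q hq.1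
    have hqw : q ≠ w := fun hc => hq.2 hc
    exact (reaches_eraseLeaf hf hfw hleaf h1 hqw).2 (fun hc => hp.2 hc)
  have hrel' : ∀ l, (H.eraseLeaf w f hleaf).IsReducedCycleIn l → A.EdgesIn l :=
    fun l hl => hrel l ⟨hl.1, fun x hx => (hl.2 x hx).1⟩
  have hcard' : (H.eraseLeaf w f hleaf).edges.ncard ≤ n := by
    have hpair : ({f, G.bar f} : Set G.E) ⊆ H.edges := by
      rintro x (rfl | hx)
      · exact hf
      · rw [Set.mem_singleton_iff] at hx
        exact hx ▸ H.bar_mem hf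
    have h2 : (H.eraseLeaf w f hleaf).edges.ncard = H.edges.ncard - 2 := by
      show (H.edges \ {f, G.bar f}).ncard = H.edges.ncard - 2
      rw [Set.ncard_diff hpair (Set.toFinite _), Set.ncard_pair (G.bar_ne f).symm]
    omega
  rw [← euler_eraseLeaf hf hw hleaf]
  exact ih _ hcard' hle' hconn' hrel'

lemma euler_aux {A : Subgraph G} [Fintype G.V] [Fintype G.E] (hAne : A.verts.Nonempty)
    (hAconn : A.Connected) :
    ∀ (n : ℕ) (H : Subgraph G), H.edges.ncard ≤ n → A.le H → H.Connected →
      (∀ l, H.IsReducedCycleIn l → A.EdgesIn l) → H.eulerChar = A.eulerChar := by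
  intro n
  induction n with
  | zero =>
    intro H hn hle hconn hrel
    have hsub : H.edges ⊆ A.edges := by
      have h0 : H.edges = ∅ := (Set.ncard_eq_zero (Set.toFinite _)).mp (Nat.le_zero.mp hn)
      rw [h0]
      exact Set.empty_subset _
    exact euler_eq_of_edges_subset hle hconn hAne hsub
  | succ n ih =>
    intro H hn hle hconn hrel
    by_cases hsub : H.edges ⊆ A.edges
    · exact euler_eq_of_edges_subset hle hconn hAne hsub
    · obtain ⟨e1, he1, he1A⟩ : ∃ e, e ∈ H.edges ∧ e ∉ A.edges := by
        by_contra hc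
        push_neg at hc
        exact hsub hc
      obtain ⟨l, hP, hmax⟩ := exists_max_outWalk hrel he1 he1A
      obtain ⟨hne, hchain, hnred, hmem⟩ := hP
      have he0 : l.head hne ∈ H.edges ∧ l.head hne ∉ A.edges := hmem _ (List.head_mem hne)
      have hfm : l.getLast hne ∈ H.edges ∧ l.getLast hne ∉ A.edges :=
        hmem _ (List.getLast_mem hne)
      have hE1 : ∀ g, g ∈ H.edges → g ∉ A.edges → G.init g = G.term (l.getLast hne) →
          g = G.bar (l.getLast hne) := by
        intro g hg1 hg2 hg3
        by_contra hgf
        have hP' : OutWalk H A (l ++ [g]) := by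
          refine ⟨by simp, ?_, ?_, ?_⟩
          · refine List.isChain_append.mpr ⟨hchain, List.isChain_singleton _, ?_⟩
            intro a ha b hb
            have ha' : a = l.getLast hne := eq_getLast_of_getLast? hne (Option.mem_def.mp ha)
            have hb' : b = g := by have := hb; simp at this; exact this.symm
            rw [ha', hb']
            exact hg3.symm
          · refine List.isChain_append.mpr ⟨hnred, List.isChain_singleton _, ?_⟩
            intro a ha b hb
            have ha' : a = l.getLast hne := eq_getLast_of_getLast? hne (Option.mem_def.mp ha)
            have hb' : b = g := by have := hb; simp at this; exact this.symm
            rw [ha', hb']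
            exact hgf
          · intro x hx
            rcases List.mem_append.mp hx with hx | hx
            · exact hmem x hx
            · simp only [List.mem_singleton] at hx
              subst hx
              exact ⟨hg1, hg2⟩
        have := hmax _ hP'
        simp at this
      have hE2 : ∀ g, g ∈ H.edges → g ∉ A.edges → G.init g = G.init (l.head hne) →
          g = l.head hne := by
        intro g hg1 hg2 hg3
        by_contra hgf
        have hP' : OutWalk H A (G.bar g :: l) := by
          refine ⟨by simp, ?_, ?_, ?_⟩
          · refine List.isChain_cons.mpr ⟨?_, hchain⟩
            intro y hy
            have hy' : y = l.head hne := eq_head_of_head? hne (Option.mem_def.mp hy)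
            rw [hy', term_bar]
            exact hg3
          · refine List.isChain_cons.mpr ⟨?_, hnred⟩
            intro y hy
            have hy' : y = l.head hne := eq_head_of_head? hne (Option.mem_def.mp hy)
            rw [hy', G.bar_bar]
            exact fun hc => hgf hc.symm
          · intro x hx
            rcases List.mem_cons.mp hx with rfl | hx
            · exact ⟨H.bar_mem hg1, bar_not_mem hg2⟩
            · exact hmem x hx
        have := hmax _ hP'
        simp at this
      by_cases hwA : G.term (l.getLast hne) ∈ A.verts
      · by_cases hvA : G.init (l.head hne) ∈ A.verts
        · exfalso
          by_cases hvw : G.init (l.head hne) = G.term (l.getLast hne)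
          · have hclose : ∀ e' f', l.head? = some e' → l.getLast? = some f' →
                G.term f' = G.init e' := by
              intro e' f' he' hf'
              rw [eq_head_of_head? hne he', eq_getLast_of_getLast? hne hf']
              exact hvw.symm
            obtain ⟨c, hc, hcsub⟩ := cycle_of_closed l.length l le_rfl hne hchain hnred hclose
            have hA : A.EdgesIn c := hrel c ⟨hc, fun x hx => (hmem x (hcsub x hx)).1⟩
            obtain ⟨x, hx⟩ := List.exists_mem_of_ne_nil c hc.1.1
            exact (hmem x (hcsub x hx)).2 (hA x hx)
          · obtain ⟨pw, hpw, hpwred⟩ := connected_reduced_walk hAconn hwA hvA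
            have hpwne : pw ≠ [] := by
              rintro rfl
              exact hvw ((hpw.2.2.2.2 rfl).1).symm
            obtain ⟨pE, pC, pH, pL, pN⟩ := hpw
            have hcyc : H.IsReducedCycleIn (l ++ pw) := by
              refine ⟨⟨⟨by simp [hne], ?_, ?_⟩, ?_, ?_⟩, ?_⟩
              · refine List.isChain_append.mpr ⟨hchain, pC, ?_⟩
                intro a ha b hb
                rw [eq_getLast_of_getLast? hne (Option.mem_def.mp ha)]
                exact (pH b (Option.mem_def.mp hb)).symm
              · intro e' f' he' hf'
                rw [List.head?_append_of_ne_nil _ hne] at he'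
                rw [List.getLast?_append_of_ne_nil _ hpwne] at hf'
                rw [eq_head_of_head? hne he']
                exact pL f' hf'
              · refine List.isChain_append.mpr ⟨hnred, hpwred, ?_⟩
                intro a ha b hb
                rw [eq_getLast_of_getLast? hne (Option.mem_def.mp ha)]
                intro hcb
                exact bar_not_mem hfm.2 (hcb ▸ pE b (List.mem_of_mem_head? hb))
              · intro e' f' he' hf'
                rw [List.head?_append_of_ne_nil _ hne] at he'
                rw [List.getLast?_append_of_ne_nil _ hpwne] at hf'
                rw [eq_head_of_head? hne he']
                intro hcb
                exact he0.2 (hcb ▸ A.bar_mem (pE f' (List.mem_of_mem_getLast? hf')))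
              · intro x hx
                rcases List.mem_append.mp hx with hx | hx
                · exact (hmem x hx).1
                · exact hle.2 (pE x hx)
            have hA := hrel _ hcyc
            exact he0.2 (hA _ (List.mem_append_left _ (List.head_mem hne)))
        · refine erase_step ih H hn hle hconn hrel hAne hvA (H.bar_mem he0.1)
            (bar_not_mem he0.2) (term_bar _) ?_
          intro g hg hginit
          rw [G.bar_bar]
          exact hE2 g hg (fun hc => hvA (hginit ▸ A.init_mem hc)) hginit
      · refine erase_step ih H hn hle hconn hrel hAne hwA hfm.1 hfm.2 rfl ?_
        intro g hg hginit
        exact hE1 g hg (fun hc => hwA (hginit ▸ A.init_mem hc)) hginit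

end Subgraph

end SGraph

/-- If `C` (here: the full subgraph of the finite graph `G`) is
connected, `A` is a nonempty connected subgraph, and `C` is a tree relative to
`A`, then `χ(C) = χ(A)`. -/
theorem euler_char_of_relative_tree
    (G : SGraph) [Fintype G.V] [Fintype G.E]
    (A : SGraph.Subgraph G)
    (hconn : (G.full).Connected)
    (hAne : A.verts.Nonempty)
    (hAconn : A.Connected)
    (hrel : (G.full).ForestRel A) :
    (G.full).eulerChar = A.eulerChar :=
  SGraph.Subgraph.euler_aux hAne hAconn (G.full).edges.ncard (G.full) le_rfl
    ⟨Set.subset_univ _, Set.subset_univ _⟩ hconn hrel
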